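/- Let f : 𝒮 → ℝ be a positive decreasing function defined on a measurable set 𝒮 ⊂ (0, δ) whose complement in (0, δ) has Lebesgue measure zero. Then sup over pairs t₁ < t₂ in 𝒮 of the quantity f(t₂)^{4/3}·(t₂ − t₁) / ((t₂ + t₁)·(f(t₁) − f(t₂))) equals +∞. -/

import Mathlib

open MeasureTheory Set

set_option maxHeartbeats 1600000 in
/-- **Lemma 5.4.** Let `f : 𝒮 → ℝ` be a positive decreasing function on a measurable
set `𝒮 ⊂ (0, δ)` of full measure. Then
`sup_{t₁,t₂ ∈ 𝒮, t₁ < t₂} f(t₂)^(4/3) (t₂ - t₁) / ((t₂ + t₁)(f(t₁) - f(t₂))) = ∞`. -/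
theorem stmt1 (δ : ℝ) (hδ : 0 < δ) (S : Set ℝ) (hSmeas : MeasurableSet S)
    (hSsub : S ⊆ Ioo (0:ℝ) δ) (hSfull : volume (Ioo (0:ℝ) δ \ S) = 0)
    (f : ℝ → ℝ)
    (hpos : ∀ t ∈ S, 0 < f t)
    (hdec : ∀ s ∈ S, ∀ t ∈ S, s < t → f t < f s) :
    ∀ M : ℝ, ∃ t₁ ∈ S, ∃ t₂ ∈ S, t₁ < t₂ ∧
      (f t₂) ^ ((4:ℝ)/3) * (t₂ - t₁) / ((t₂ + t₁) * (f t₁ - f t₂)) > M := by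
  intro M
  by_contra hcon
  push_neg at hcon
  -- points of S in every subinterval
  have hpt : ∀ a b : ℝ, 0 ≤ a → a < b → b ≤ δ → ∃ x ∈ S, a < x ∧ x < b := by
    intro a b ha hab hbδ
    by_contra h
    push_neg at h
    have hsub : Ioo a b ⊆ Ioo 0 δ \ S := by
      intro x hx
      refine ⟨⟨lt_of_le_of_lt ha hx.1, lt_of_lt_of_le hx.2 hbδ⟩, fun hxS => ?_⟩
      exact absurd (h x hxS hx.1) (not_le.mpr hx.2)
    have h0 := measure_mono_null hsub hSfull
    rw [Real.volume_Ioo] at h0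
    have : b - a ≤ 0 := by simpa using (ENNReal.ofReal_eq_zero.mp h0)
    linarith
  obtain ⟨t₀, ht₀S, ht₀pos, ht₀δ⟩ := hpt 0 δ le_rfl hδ le_rfl
  obtain ⟨t₁, ht₁S, ht₁pos, ht₁lt⟩ := hpt 0 t₀ le_rfl ht₀pos ht₀δ.le
  have hM : 0 < M := by
    have h := hcon t₁ ht₁S t₀ ht₀S ht₁lt
    have hratio : 0 < f t₀ ^ ((4:ℝ)/3) * (t₀ - t₁) / ((t₀ + t₁) * (f t₁ - f t₀)) := by
      apply div_pos
      · exact mul_pos (Real.rpow_pos_of_pos (hpos t₀ ht₀S) _) (by linarith)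
      · exact mul_pos (by linarith) (by linarith [hdec t₁ ht₁S t₀ ht₀S ht₁lt])
    linarith
  have hgain : ∀ s ∈ S, ∀ t ∈ S, s < t →
      f t ^ ((4:ℝ)/3) * (t - s) ≤ M * ((t + s) * (f s - f t)) := by
    intro s hs t ht hst
    have h := hcon s hs t ht hst
    have hd : 0 < (t + s) * (f s - f t) := by
      have h1 := (hSsub hs).1
      have h2 := (hSsub ht).1
      exact mul_pos (by linarith) (by linarith [hdec s hs t ht hst])
    exact (div_le_iff₀ hd).mp h
  by_cases hb : ∃ B : ℝ, ∀ t ∈ S, t < t₀ → f t ≤ B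
  · -- bounded case
    obtain ⟨B, hB⟩ := hb
    have hL : 0 < f t₀ := hpos t₀ ht₀S
    set L := f t₀ with hLdef
    set cg := L ^ ((4:ℝ)/3) / (4*M) with hcg
    have hcgain : 0 < cg := div_pos (Real.rpow_pos_of_pos hL _) (by linarith)
    have key2 : ∀ k : ℕ, ∃ q ∈ S, 0 < q ∧ q < t₀ ∧ L + k * cg ≤ f q := by
      intro k
      induction k with
      | zero =>
        exact ⟨t₁, ht₁S, ht₁pos, ht₁lt, by simpa using (hdec t₁ ht₁S t₀ ht₀S ht₁lt).le⟩
      | succ k ih =>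
        obtain ⟨q, hqS, hq0, hqt₀, hqf⟩ := ih
        obtain ⟨s, hsS, hs1, hs2⟩ := hpt (q/4) (q/2) (by linarith) (by linarith)
          (by linarith)
        have hsq : s < q := by linarith
        have hfsq := hdec s hsS q hqS hsq
        have hg := hgain s hsS q hqS hsq
        have hfqL : L ≤ f q := (hdec q hqS t₀ ht₀S hqt₀).le
        have hrpow : L ^ ((4:ℝ)/3) ≤ f q ^ ((4:ℝ)/3) :=
          Real.rpow_le_rpow hL.le hfqL (by norm_num)
        have hLp : 0 < L ^ ((4:ℝ)/3) := Real.rpow_pos_of_pos hL _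
        have h1 : L ^ ((4:ℝ)/3) * (q/2) ≤ f q ^ ((4:ℝ)/3) * (q - s) :=
          mul_le_mul hrpow (by linarith) (by linarith) (le_of_lt (lt_of_lt_of_le hLp hrpow))
        have h2 : M * ((q + s) * (f s - f q)) ≤ M * (2*q * (f s - f q)) := by
          apply mul_le_mul_of_nonneg_left _ hM.le
          apply mul_le_mul_of_nonneg_right (by linarith) (by linarith)
        have h3 : cg ≤ f s - f q := by
          rw [hcg, div_le_iff₀ (by linarith : (0:ℝ) < 4*M)]
          nlinarith [h1, h2, hg, hq0]
        refine ⟨s, hsS, (hSsub hsS).1, by linarith, ?_⟩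
        push_cast
        linarith
    obtain ⟨n, hn⟩ := exists_nat_gt ((B - L)/cg)
    obtain ⟨q, hqS, hq0, hqt₀, hqf⟩ := key2 n
    have hBq := hB q hqS hqt₀
    have : (B - L)/cg < n := hn
    rw [div_lt_iff₀ hcgain] at this
    linarith
  · -- unbounded case
    push_neg at hb
    set c := (2:ℝ) ^ ((1:ℝ)/3) with hcdef
    have hc_pos : 0 < c := Real.rpow_pos_of_pos two_pos _
    have hc3 : c ^ (3:ℕ) = 2 := by
      rw [hcdef, ← Real.rpow_natCast ((2:ℝ) ^ ((1:ℝ)/3)) 3, ← Real.rpow_mul (by norm_num)]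
      norm_num
    have hc_lb : (5/4 : ℝ) ≤ c := by nlinarith [hc3, hc_pos, sq_nonneg c, sq_nonneg (c - 5/4), sq_nonneg (c + 5/4)]
    have hc_ub : c ≤ 2 := by nlinarith [hc3, hc_pos, sq_nonneg c, sq_nonneg (c - 2)]
    have hMbd : 0 < 64*M + 1 := by linarith
    obtain ⟨p, hpS, hpt₀, hfp⟩ := hb ((64*M + 1)^(3:ℕ))
    have hp0 : 0 < p := (hSsub hpS).1
    have hpδ : p < δ := (hSsub hpS).2
    have hfp_pos : 0 < f p := hpos p hpS
    set g₀ := f p ^ ((1:ℝ)/3) with hg₀def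
    have hg₀pos : 0 < g₀ := Real.rpow_pos_of_pos hfp_pos _
    have hg₀ : 64*M + 1 ≤ g₀ := by
      have h1 : ((64*M+1)^(3:ℕ)) ^ ((1:ℝ)/3) ≤ f p ^ ((1:ℝ)/3) :=
        Real.rpow_le_rpow (by positivity) hfp.le (by norm_num)
      have h2 : ((64*M+1)^(3:ℕ)) ^ ((1:ℝ)/3) = 64*M+1 := by
        rw [← Real.rpow_natCast (64*M+1) 3, ← Real.rpow_mul (by positivity)]
        norm_num
      linarith [h1, h2.symm.trans_le h1]
    set E := 4*M*p*c/(g₀*(c-1)) with hEdef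
    have hden : 0 < g₀*(c-1) := mul_pos hg₀pos (by linarith)
    have hEpos : 0 < E := div_pos (by positivity) hden
    have hE : E ≤ p/2 := by
      rw [hEdef, div_le_iff₀ hden]
      nlinarith [mul_nonneg (mul_nonneg hp0.le (sub_nonneg.mpr hg₀)) (by linarith : (0:ℝ) ≤ c - 1),
        mul_nonneg hp0.le (mul_nonneg hM.le (by linarith : (0:ℝ) ≤ 2 - c)),
        mul_nonneg hp0.le (mul_nonneg (by linarith : (0:ℝ) ≤ 64*M+1) (by linarith : (0:ℝ) ≤ c - 5/4))]
    -- (2^k)^{1/3} = c^k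
    have h2k : ∀ k : ℕ, ((2:ℝ)^k) ^ ((1:ℝ)/3) = c ^ k := by
      intro k
      rw [← Real.rpow_natCast (2:ℝ) k, ← Real.rpow_mul (by norm_num : (0:ℝ) ≤ 2),
        mul_comm, Real.rpow_mul (by norm_num : (0:ℝ) ≤ 2), Real.rpow_natCast, hcdef]
    have key : ∀ k : ℕ, ∃ q ∈ S, q ≤ p ∧ p/2 + E/c^k ≤ q ∧ f p * 2^k ≤ f q := by
      intro k
      induction k with
      | zero =>
        refine ⟨p, hpS, le_rfl, by simpa using by linarith, by simp⟩
      | succ k ih =>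
        obtain ⟨q, hqS, hqp, hqlo, hqf⟩ := ih
        have hfq_pos : 0 < f q := hpos q hqS
        have hckpos : 0 < c ^ k := pow_pos hc_pos k
        have hck1pos : 0 < c ^ (k+1) := pow_pos hc_pos (k+1)
        -- (f q)^{1/3} ≥ g₀ c^k
        have hg : g₀ * c ^ k ≤ f q ^ ((1:ℝ)/3) := by
          have h1 : (f p * 2^k) ^ ((1:ℝ)/3) ≤ f q ^ ((1:ℝ)/3) :=
            Real.rpow_le_rpow (by positivity) hqf (by norm_num)
          have h2 : (f p * 2^k) ^ ((1:ℝ)/3) = g₀ * c ^ k := by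
            rw [Real.mul_rpow hfp_pos.le (by positivity), h2k k, hg₀def]
          linarith [h2 ▸ h1]
        have hg13pos : 0 < f q ^ ((1:ℝ)/3) := Real.rpow_pos_of_pos hfq_pos _
        set β := 4*M*p / (f q ^ ((1:ℝ)/3)) with hβdef
        have hβpos : 0 < β := div_pos (by positivity) hg13pos
        have hβub : β ≤ 4*M*p / (g₀ * c ^ k) := by
          apply div_le_div_of_nonneg_left (by positivity) (by positivity) hg
        have hEstep : E/c^k - E/c^(k+1) = 4*M*p/(g₀*c^k) := by
          rw [hEdef]
          have hc1 : c - 1 ≠ 0 := (by linarith : (0:ℝ) < c - 1).ne'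
          field_simp
          ring
        have hqβ : p/2 + E/c^(k+1) ≤ q - β := by
          have : q - β ≥ p/2 + E/c^k - 4*M*p/(g₀*c^k) := by linarith
          linarith [hEstep]
        have hEk1pos : 0 < E/c^(k+1) := div_pos hEpos hck1pos
        obtain ⟨s, hsS, hs1, hs2⟩ := hpt (q - β) (q - β/2) (by linarith) (by linarith)
          (by linarith)
        have hsq : s < q := by linarith
        have hfsq := hdec s hsS q hqS hsq
        have hg2 := hgain s hsS q hqS hsq
        -- (f q)^{4/3} * β = 4*M*p*(f q)
        have hrw : f q ^ ((4:ℝ)/3) * β = 4*M*p*(f q) := by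
          rw [hβdef, show ((4:ℝ)/3) = 1 + 1/3 by norm_num,
            Real.rpow_add hfq_pos, Real.rpow_one]
          field_simp
        have hfq43pos : 0 < f q ^ ((4:ℝ)/3) := Real.rpow_pos_of_pos hfq_pos _
        have h1 : 2*M*p*(f q) ≤ f q ^ ((4:ℝ)/3) * (q - s) := by
          have : f q ^ ((4:ℝ)/3) * (β/2) ≤ f q ^ ((4:ℝ)/3) * (q - s) := by
            apply mul_le_mul_of_nonneg_left (by linarith) hfq43pos.le
          nlinarith [hrw]
        have h2 : M * ((q + s) * (f s - f q)) ≤ M * (2*p * (f s - f q)) := by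
          apply mul_le_mul_of_nonneg_left _ hM.le
          apply mul_le_mul_of_nonneg_right (by linarith) (by linarith)
        have h3 : 2 * f q ≤ f s := by
          have hkey : 2*M*p*(f q) ≤ 2*M*p*(f s - f q) := by nlinarith [h1, hg2, h2]
          have hMp : 0 < 2*M*p := by positivity
          nlinarith [hkey]
        refine ⟨s, hsS, by linarith, by linarith, ?_⟩
        have : f p * 2^(k+1) = 2 * (f p * 2^k) := by ring
        linarith [this]
    obtain ⟨tst, htstS, htst0, htstlt⟩ := hpt 0 (p/2) le_rfl (by linarith) (by linarith)
    obtain ⟨n, hn⟩ := pow_unbounded_of_one_lt (f tst / f p) one_lt_two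
    obtain ⟨q, hqS, hqp, hqlo, hqf⟩ := key n
    have hEn : 0 < E / c^n := div_pos hEpos (pow_pos hc_pos n)
    have htq : tst < q := by linarith
    have := hdec tst htstS q hqS htq
    rw [div_lt_iff₀ hfp_pos] at hn
    nlinarith [hqf, this, hn]
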